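/- Let g(x) = |x|^ℓ with ℓ > 1, restricted to an interval on which g is monotone (e.g., [0,∞) or (-∞,0]). Then for all distinct points a,b,c,d in this interval with (b-a)(d-c) > 0, the cross-ratio distortion satisfies κ_g(a,b,c,d) ≥ 1. -/

import Mathlib

open Real Set

-- l*sinh u ≤ sinh (l*u) for u ≥ 0, l ≥ 1
lemma lemA {l : ℝ} (hl : 1 ≤ l) : ∀ u : ℝ, 0 ≤ u → l * Real.sinh u ≤ Real.sinh (l*u) := by
  have hmono : MonotoneOn (fun u => Real.sinh (l*u) - l * Real.sinh u) (Ici (0:ℝ)) := by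
    apply monotoneOn_of_hasDerivWithinAt_nonneg (convex_Ici 0)
      (f' := fun u => Real.cosh (l*u) * l - l * Real.cosh u)
    · fun_prop
    · intro x hx
      have h1 : HasDerivAt (fun u : ℝ => l*u) l x := by simpa using (hasDerivAt_id x).const_mul l
      have h2 : HasDerivAt (fun u : ℝ => Real.sinh (l*u)) (Real.cosh (l*x) * l) x :=
        (Real.hasDerivAt_sinh (l*x)).comp x h1
      have h3 : HasDerivAt (fun u : ℝ => l * Real.sinh u) (l * Real.cosh x) x :=
        (Real.hasDerivAt_sinh x).const_mul l
      exact (h2.sub h3).hasDerivWithinAt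
    · intro x hx
      rw [interior_Ici, mem_Ioi] at hx
      have : Real.cosh x ≤ Real.cosh (l*x) := by
        rw [Real.cosh_le_cosh, abs_of_pos hx, abs_of_pos (by nlinarith)]
        nlinarith
      nlinarith [this, (by linarith : (0:ℝ) ≤ l)]
  intro u hu
  simpa using hmono (self_mem_Ici) (mem_Ici.mpr hu) hu

-- sinh(l u) cosh u ≤ l cosh(l u) sinh u for u ≥ 0, l ≥ 1
lemma lemB {l : ℝ} (hl : 1 ≤ l) : ∀ u : ℝ, 0 ≤ u →
    Real.sinh (l*u) * Real.cosh u ≤ l * Real.cosh (l*u) * Real.sinh u := by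
  have hmono : MonotoneOn (fun u => l * Real.cosh (l*u) * Real.sinh u - Real.sinh (l*u) * Real.cosh u)
      (Ici (0:ℝ)) := by
    apply monotoneOn_of_hasDerivWithinAt_nonneg (convex_Ici 0)
      (f' := fun u => (l^2 - 1) * (Real.sinh (l*u) * Real.sinh u))
    · fun_prop
    · intro x hx
      have h1 : HasDerivAt (fun u : ℝ => l*u) l x := by simpa using (hasDerivAt_id x).const_mul l
      have h2 : HasDerivAt (fun u : ℝ => Real.cosh (l*u)) (Real.sinh (l*x) * l) x :=
        (Real.hasDerivAt_cosh (l*x)).comp x h1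
      have h2' : HasDerivAt (fun u : ℝ => Real.sinh (l*u)) (Real.cosh (l*x) * l) x :=
        (Real.hasDerivAt_sinh (l*x)).comp x h1
      have h4 : HasDerivAt (fun u : ℝ => l * Real.cosh (l*u) * Real.sinh u)
          ((l * (Real.sinh (l*x) * l)) * Real.sinh x + (l * Real.cosh (l*x)) * Real.cosh x) x :=
        (h2.const_mul l).mul (Real.hasDerivAt_sinh x)
      have h5 : HasDerivAt (fun u : ℝ => Real.sinh (l*u) * Real.cosh u)
          ((Real.cosh (l*x) * l) * Real.cosh x + Real.sinh (l*x) * Real.sinh x) x :=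
        h2'.mul (Real.hasDerivAt_cosh x)
      exact ((h4.sub h5).congr_deriv (by ring)).hasDerivWithinAt
    · intro x hx
      rw [interior_Ici, mem_Ioi] at hx
      have s1 : 0 ≤ Real.sinh x := Real.sinh_nonneg_iff.mpr hx.le
      have s2 : 0 ≤ Real.sinh (l*x) := Real.sinh_nonneg_iff.mpr (by nlinarith)
      have hl2 : 0 ≤ l^2 - 1 := by nlinarith
      exact mul_nonneg hl2 (mul_nonneg s2 s1)
  intro u hu
  simpa using hmono (self_mem_Ici) (mem_Ici.mpr hu) hu

noncomputable def Gf (l : ℝ) : ℝ → ℝ :=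
  fun t => Real.log (Real.sinh (l*t/2)) - Real.log (Real.sinh (t/2))
noncomputable def Gf1 (l : ℝ) : ℝ → ℝ :=
  fun t => l/2 * (Real.cosh (l*t/2)/Real.sinh (l*t/2)) - 1/2 * (Real.cosh (t/2)/Real.sinh (t/2))
noncomputable def Gf2 (l : ℝ) : ℝ → ℝ :=
  fun t => (1/2)^2 / (Real.sinh (t/2))^2 - (l/2)^2 / (Real.sinh (l*t/2))^2

lemma sinh_half_pos {t : ℝ} (ht : 0 < t) : 0 < Real.sinh (t/2) :=
  Real.sinh_pos_iff.mpr (by linarith)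

lemma sinh_lhalf_pos {l t : ℝ} (hl : 1 ≤ l) (ht : 0 < t) : 0 < Real.sinh (l*t/2) :=
  Real.sinh_pos_iff.mpr (by nlinarith)

lemma Gf_hasDeriv {l : ℝ} (hl : 1 ≤ l) {t : ℝ} (ht : 0 < t) :
    HasDerivAt (Gf l) (Gf1 l t) t := by
  have h1 : HasDerivAt (fun u : ℝ => l*u/2) (l/2) t := by
    simpa using ((hasDerivAt_id t).const_mul l).div_const 2
  have h1' : HasDerivAt (fun u : ℝ => u/2) (1/2) t := by
    simpa using (hasDerivAt_id t).div_const 2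
  have hs : Real.sinh (l*t/2) ≠ 0 := (sinh_lhalf_pos hl ht).ne'
  have hs' : Real.sinh (t/2) ≠ 0 := (sinh_half_pos ht).ne'
  have h2 : HasDerivAt (fun u : ℝ => Real.sinh (l*u/2)) (Real.cosh (l*t/2) * (l/2)) t :=
    (Real.hasDerivAt_sinh _).comp t h1
  have h2' : HasDerivAt (fun u : ℝ => Real.sinh (u/2)) (Real.cosh (t/2) * (1/2)) t :=
    (Real.hasDerivAt_sinh _).comp t h1'
  have h3 : HasDerivAt (fun u : ℝ => Real.log (Real.sinh (l*u/2)))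
      ((Real.sinh (l*t/2))⁻¹ * (Real.cosh (l*t/2) * (l/2))) t :=
    HasDerivAt.comp (h₂ := Real.log) t (Real.hasDerivAt_log hs) h2
  have h3' : HasDerivAt (fun u : ℝ => Real.log (Real.sinh (u/2)))
      ((Real.sinh (t/2))⁻¹ * (Real.cosh (t/2) * (1/2))) t :=
    HasDerivAt.comp (h₂ := Real.log) t (Real.hasDerivAt_log hs') h2'
  refine (h3.sub h3').congr_deriv ?_
  simp only [Gf1]
  field_simp

lemma Gf1_hasDeriv {l : ℝ} (hl : 1 ≤ l) {t : ℝ} (ht : 0 < t) :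
    HasDerivAt (Gf1 l) (Gf2 l t) t := by
  have h1 : HasDerivAt (fun u : ℝ => l*u/2) (l/2) t := by
    simpa using ((hasDerivAt_id t).const_mul l).div_const 2
  have h1' : HasDerivAt (fun u : ℝ => u/2) (1/2) t := by
    simpa using (hasDerivAt_id t).div_const 2
  have hs : Real.sinh (l*t/2) ≠ 0 := (sinh_lhalf_pos hl ht).ne'
  have hs' : Real.sinh (t/2) ≠ 0 := (sinh_half_pos ht).ne'
  have hc : HasDerivAt (fun u : ℝ => Real.cosh (l*u/2)) (Real.sinh (l*t/2) * (l/2)) t :=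
    (Real.hasDerivAt_cosh _).comp t h1
  have hc' : HasDerivAt (fun u : ℝ => Real.cosh (u/2)) (Real.sinh (t/2) * (1/2)) t :=
    (Real.hasDerivAt_cosh _).comp t h1'
  have hss : HasDerivAt (fun u : ℝ => Real.sinh (l*u/2)) (Real.cosh (l*t/2) * (l/2)) t :=
    (Real.hasDerivAt_sinh _).comp t h1
  have hss' : HasDerivAt (fun u : ℝ => Real.sinh (u/2)) (Real.cosh (t/2) * (1/2)) t :=
    (Real.hasDerivAt_sinh _).comp t h1'
  have hq : HasDerivAt (fun u : ℝ => Real.cosh (l*u/2)/Real.sinh (l*u/2))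
      ((Real.sinh (l*t/2) * (l/2) * Real.sinh (l*t/2) -
        Real.cosh (l*t/2) * (Real.cosh (l*t/2) * (l/2))) / (Real.sinh (l*t/2))^2) t :=
    hc.div hss hs
  have hq' : HasDerivAt (fun u : ℝ => Real.cosh (u/2)/Real.sinh (u/2))
      ((Real.sinh (t/2) * (1/2) * Real.sinh (t/2) -
        Real.cosh (t/2) * (Real.cosh (t/2) * (1/2))) / (Real.sinh (t/2))^2) t :=
    hc'.div hss' hs'
  refine ((hq.const_mul (l/2)).sub (hq'.const_mul (1/2))).congr_deriv ?_
  simp only [Gf2]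
  have e1 : Real.cosh (l*t/2)^2 = Real.sinh (l*t/2)^2 + 1 := Real.cosh_sq _
  have e2 : Real.cosh (t/2)^2 = Real.sinh (t/2)^2 + 1 := Real.cosh_sq _
  have r1 : Real.sinh (l*t/2) * (l/2) * Real.sinh (l*t/2) -
      Real.cosh (l*t/2) * (Real.cosh (l*t/2) * (l/2)) = -(l/2) := by
    linear_combination (-(l/2)) * e1
  have r2 : Real.sinh (t/2) * (1/2) * Real.sinh (t/2) -
      Real.cosh (t/2) * (Real.cosh (t/2) * (1/2)) = -(1/2 : ℝ) := by
    linear_combination (-(1/2 : ℝ)) * e2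
  rw [r1, r2]
  field_simp
  ring

lemma Gf1_nonneg {l : ℝ} (hl : 1 ≤ l) {t : ℝ} (ht : 0 < t) : 0 ≤ Gf1 l t := by
  have hB := lemB hl (t/2) (by linarith)
  rw [show l * (t/2) = l*t/2 by ring] at hB
  have p1 := sinh_half_pos ht
  have p2 := sinh_lhalf_pos hl ht
  have c1 := Real.cosh_pos (t/2)
  have c2 := Real.cosh_pos (l*t/2)
  simp only [Gf1, sub_nonneg]
  rw [mul_div_assoc', mul_div_assoc', div_le_div_iff₀ p1 p2]
  nlinarith

lemma Gf2_nonneg {l : ℝ} (hl : 1 ≤ l) {t : ℝ} (ht : 0 < t) : 0 ≤ Gf2 l t := by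
  have hA := lemA hl (t/2) (by linarith)
  rw [show l * (t/2) = l*t/2 by ring] at hA
  have p1 := sinh_half_pos ht
  have p2 := sinh_lhalf_pos hl ht
  simp only [Gf2, sub_nonneg]
  rw [div_le_div_iff₀ (by positivity) (by positivity)]
  nlinarith [pow_le_pow_left₀ (by positivity : (0:ℝ) ≤ l * Real.sinh (t/2)) hA 2]

lemma Gf_mono {l : ℝ} (hl : 1 ≤ l) : MonotoneOn (Gf l) (Ioi (0:ℝ)) := by
  apply monotoneOn_of_hasDerivWithinAt_nonneg (convex_Ioi 0) (f' := Gf1 l)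
  · intro x hx
    exact (Gf_hasDeriv hl hx).continuousAt.continuousWithinAt
  · intro x hx
    rw [interior_Ioi] at hx
    exact (Gf_hasDeriv hl hx).hasDerivWithinAt
  · intro x hx
    rw [interior_Ioi] at hx
    exact Gf1_nonneg hl hx

lemma Gf_convex {l : ℝ} (hl : 1 ≤ l) : ConvexOn ℝ (Ioi (0:ℝ)) (Gf l) := by
  apply convexOn_of_hasDerivWithinAt2_nonneg (convex_Ioi 0) (f' := Gf1 l) (f'' := Gf2 l)
  · intro x hx
    exact (Gf_hasDeriv hl hx).continuousAt.continuousWithinAt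
  · intro x hx
    rw [interior_Ioi] at hx
    exact (Gf_hasDeriv hl hx).hasDerivWithinAt
  · intro x hx
    rw [interior_Ioi] at hx
    exact (Gf1_hasDeriv hl hx).hasDerivWithinAt
  · intro x hx
    rw [interior_Ioi] at hx
    exact Gf2_nonneg hl hx

lemma twopoint {l : ℝ} (hl : 1 ≤ l) {x₁ x₂ y₁ y₂ : ℝ}
    (hx₁ : 0 < x₁) (hx₂ : 0 < x₂) (hy₁ : 0 < y₁) (hy₂ : 0 < y₂)
    (h1 : x₁ ≤ y₂) (h2 : x₂ ≤ y₂) (h3 : y₁ ≤ y₂) (hsum : x₁ + x₂ ≤ y₁ + y₂) :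
    Gf l x₁ + Gf l x₂ ≤ Gf l y₁ + Gf l y₂ := by
  have hmono := Gf_mono hl
  by_cases c1 : x₁ ≤ y₁
  · have := hmono (mem_Ioi.mpr hx₁) (mem_Ioi.mpr hy₁) c1
    have := hmono (mem_Ioi.mpr hx₂) (mem_Ioi.mpr hy₂) h2
    linarith
  by_cases c2 : x₂ ≤ y₁
  · have := hmono (mem_Ioi.mpr hx₂) (mem_Ioi.mpr hy₁) c2
    have := hmono (mem_Ioi.mpr hx₁) (mem_Ioi.mpr hy₂) h1
    linarith
  push_neg at c1 c2
  have hyy : y₁ < y₂ := lt_of_lt_of_le c1 h1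
  have hG12 : Gf l y₁ ≤ Gf l y₂ := hmono (mem_Ioi.mpr hy₁) (mem_Ioi.mpr hy₂) h3
  set μ₁ : ℝ := (y₂ - x₁)/(y₂ - y₁) with hμ₁
  set μ₂ : ℝ := (y₂ - x₂)/(y₂ - y₁) with hμ₂
  have hden : 0 < y₂ - y₁ := by linarith
  have hμ₁0 : 0 ≤ μ₁ := div_nonneg (by linarith) hden.le
  have hμ₂0 : 0 ≤ μ₂ := div_nonneg (by linarith) hden.le
  have hμ₁1 : μ₁ ≤ 1 := by rw [hμ₁, div_le_one hden]; linarith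
  have hμ₂1 : μ₂ ≤ 1 := by rw [hμ₂, div_le_one hden]; linarith
  have hx₁e : x₁ = μ₁ * y₁ + (1 - μ₁) * y₂ := by rw [hμ₁]; field_simp; ring
  have hx₂e : x₂ = μ₂ * y₁ + (1 - μ₂) * y₂ := by rw [hμ₂]; field_simp; ring
  have hc := Gf_convex hl
  have hcx₁ : Gf l x₁ ≤ μ₁ * Gf l y₁ + (1 - μ₁) * Gf l y₂ := by
    have := hc.2 (mem_Ioi.mpr hy₁) (mem_Ioi.mpr hy₂) hμ₁0
      (show (0:ℝ) ≤ 1 - μ₁ by linarith) (by ring)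
    rw [smul_eq_mul, smul_eq_mul, ← hx₁e] at this
    simpa [smul_eq_mul] using this
  have hcx₂ : Gf l x₂ ≤ μ₂ * Gf l y₁ + (1 - μ₂) * Gf l y₂ := by
    have := hc.2 (mem_Ioi.mpr hy₁) (mem_Ioi.mpr hy₂) hμ₂0
      (show (0:ℝ) ≤ 1 - μ₂ by linarith) (by ring)
    rw [smul_eq_mul, smul_eq_mul, ← hx₂e] at this
    simpa [smul_eq_mul] using this
  have hμsum : 1 ≤ μ₁ + μ₂ := by
    rw [hμ₁, hμ₂, ← add_div, le_div_iff₀ hden]; linarith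
  have e : (μ₁ + μ₂ - 1) * Gf l y₁ ≤ (μ₁ + μ₂ - 1) * Gf l y₂ :=
    mul_le_mul_of_nonneg_left hG12 (by linarith)
  nlinarith [e, hcx₁, hcx₂]

lemma core4 {l : ℝ} (hl : 1 ≤ l) {A B C D : ℝ} (hAB : A < B) (hCD : C < D)
    (hCA : C ≠ A) (hDB : D ≠ B) (hDA : D ≠ A) (hCB : C ≠ B) :
    Gf l |C - A| + Gf l |D - B| ≤ Gf l |D - A| + Gf l |C - B| := by
  set p := C - A; set q := D - B; set p' := D - A; set q' := C - B
  have h1 : q' < p := by simp only [p, q']; linarith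
  have h2 : p < p' := by simp only [p, p']; linarith
  have h3 : q' < q := by simp only [q, q']; linarith
  have h4 : q < p' := by simp only [q, p']; linarith
  have hpq : p + q = p' + q' := by simp only [p, q, p', q']; ring
  have hp : p ≠ 0 := sub_ne_zero.mpr hCA
  have hq : q ≠ 0 := sub_ne_zero.mpr hDB
  have hp' : p' ≠ 0 := sub_ne_zero.mpr hDA
  have hq' : q' ≠ 0 := sub_ne_zero.mpr hCB
  -- y₂ is the larger of |p'|,|q'|
  rcases le_total |p'| |q'| with hmax | hmax
  · have e1 : |p| ≤ |q'| := by
      rcases abs_cases p with ⟨e, s⟩ | ⟨e, s⟩ <;> rcases abs_cases p' with ⟨e', s'⟩ | ⟨e', s'⟩ <;>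
        rcases abs_cases q' with ⟨e'', s''⟩ | ⟨e'', s''⟩ <;> linarith [le_abs_self p', neg_le_abs p']
    have e2 : |q| ≤ |q'| := by
      rcases abs_cases q with ⟨e, s⟩ | ⟨e, s⟩ <;> rcases abs_cases p' with ⟨e', s'⟩ | ⟨e', s'⟩ <;>
        rcases abs_cases q' with ⟨e'', s''⟩ | ⟨e'', s''⟩ <;> linarith [le_abs_self p', neg_le_abs p']
    have esum : |p| + |q| ≤ |p'| + |q'| := by
      rcases abs_cases p with ⟨e, s⟩ | ⟨e, s⟩ <;> rcases abs_cases q with ⟨eq, sq⟩ | ⟨eq, sq⟩ <;>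
        rcases abs_cases p' with ⟨e', s'⟩ | ⟨e', s'⟩ <;>
        rcases abs_cases q' with ⟨e'', s''⟩ | ⟨e'', s''⟩ <;> linarith
    have := twopoint hl (abs_pos.mpr hp) (abs_pos.mpr hq) (abs_pos.mpr hp') (abs_pos.mpr hq')
      e1 e2 hmax (by linarith)
    linarith
  · have e1 : |p| ≤ |p'| := by
      rcases abs_cases p with ⟨e, s⟩ | ⟨e, s⟩ <;> rcases abs_cases p' with ⟨e', s'⟩ | ⟨e', s'⟩ <;>
        rcases abs_cases q' with ⟨e'', s''⟩ | ⟨e'', s''⟩ <;> linarith [le_abs_self q', neg_le_abs q']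
    have e2 : |q| ≤ |p'| := by
      rcases abs_cases q with ⟨e, s⟩ | ⟨e, s⟩ <;> rcases abs_cases p' with ⟨e', s'⟩ | ⟨e', s'⟩ <;>
        rcases abs_cases q' with ⟨e'', s''⟩ | ⟨e'', s''⟩ <;> linarith [le_abs_self q', neg_le_abs q']
    have esum : |p| + |q| ≤ |p'| + |q'| := by
      rcases abs_cases p with ⟨e, s⟩ | ⟨e, s⟩ <;> rcases abs_cases q with ⟨eq, sq⟩ | ⟨eq, sq⟩ <;>
        rcases abs_cases p' with ⟨e', s'⟩ | ⟨e', s'⟩ <;>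
        rcases abs_cases q' with ⟨e'', s''⟩ | ⟨e'', s''⟩ <;> linarith
    have := twopoint hl (abs_pos.mpr hp) (abs_pos.mpr hq) (abs_pos.mpr hq') (abs_pos.mpr hp')
      e1 e2 hmax (by linarith)
    linarith

lemma expdiff (k X Y : ℝ) :
    Real.exp (k*Y) - Real.exp (k*X) = Real.exp (k*(X+Y)/2) * (2 * Real.sinh (k*(Y-X)/2)) := by
  rw [Real.sinh_eq]
  rw [show (2:ℝ) * ((Real.exp (k*(Y-X)/2) - Real.exp (-(k*(Y-X)/2)))/2)
      = Real.exp (k*(Y-X)/2) - Real.exp (-(k*(Y-X)/2)) by ring]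
  rw [mul_sub, ← Real.exp_add, ← Real.exp_add]
  congr 1 <;> ring

lemma Sform {l : ℝ} (hl : 1 ≤ l) {x y : ℝ} (hx : 0 < x) (hy : 0 < y) (hxy : x < y) :
    (y^l - x^l)/(y - x) =
      Real.exp ((l-1)*(Real.log x + Real.log y)/2) *
        Real.exp (Gf l |Real.log y - Real.log x|) := by
  set X := Real.log x; set Y := Real.log y
  have hXY : X < Y := Real.log_lt_log hx hxy
  have hτ : 0 < Y - X := by linarith
  have habs : |Y - X| = Y - X := abs_of_pos hτ
  have hsp := sinh_half_pos hτ
  have hsp' := sinh_lhalf_pos hl hτ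
  have hGe : Real.exp (Gf l |Y - X|) = Real.sinh (l*(Y-X)/2) / Real.sinh ((Y-X)/2) := by
    rw [habs]
    simp only [Gf]
    rw [Real.exp_sub, Real.exp_log hsp', Real.exp_log hsp]
  have hnum : y^l - x^l = Real.exp (l*(X+Y)/2) * (2 * Real.sinh (l*(Y-X)/2)) := by
    rw [Real.rpow_def_of_pos hx, Real.rpow_def_of_pos hy, mul_comm (Real.log x) l,
      mul_comm (Real.log y) l]
    exact expdiff l X Y
  have hden : y - x = Real.exp ((X+Y)/2) * (2 * Real.sinh ((Y-X)/2)) := by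
    have := expdiff 1 X Y
    simpa [X, Y, Real.exp_log hx, Real.exp_log hy] using this
  rw [hnum, hden, hGe]
  rw [show Real.exp ((l-1)*(X+Y)/2) = Real.exp (l*(X+Y)/2) / Real.exp ((X+Y)/2) by
    rw [← Real.exp_sub]; congr 1; ring]
  field_simp

lemma Sform' {l : ℝ} (hl : 1 ≤ l) {x y : ℝ} (hx : 0 < x) (hy : 0 < y) (hxy : x ≠ y) :
    (y^l - x^l)/(y - x) =
      Real.exp ((l-1)*(Real.log x + Real.log y)/2) *
        Real.exp (Gf l |Real.log y - Real.log x|) := by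
  rcases lt_or_gt_of_ne hxy with h | h
  · exact Sform hl hx hy h
  · have := Sform hl hy hx h
    have e : (y^l - x^l)/(y - x) = (x^l - y^l)/(x - y) := by
      rw [← neg_sub (x^l) (y^l), ← neg_sub x y, neg_div_neg_eq]
    rw [e, this, add_comm (Real.log y) (Real.log x), abs_sub_comm]

lemma Sineq_pos {l : ℝ} (hl : 1 ≤ l) {a b c d : ℝ}
    (ha : 0 < a) (hb : 0 < b) (hc : 0 < c) (hd : 0 < d)
    (hab : a < b) (hcd : c < d) (hac : a ≠ c) (had : a ≠ d) (hbc : b ≠ c) (hbd : b ≠ d) :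
    (c^l - a^l)/(c - a) * ((d^l - b^l)/(d - b)) ≤
      (d^l - a^l)/(d - a) * ((c^l - b^l)/(c - b)) := by
  set A := Real.log a; set B := Real.log b; set C := Real.log c; set D := Real.log d
  have hAB : A < B := Real.log_lt_log ha hab
  have hCD : C < D := Real.log_lt_log hc hcd
  have hlog : ∀ {u v : ℝ}, 0 < u → 0 < v → u ≠ v → Real.log u ≠ Real.log v := by
    intro u v hu hv huv h
    exact huv (by rw [← Real.exp_log hu, ← Real.exp_log hv, h])
  have hcore := core4 hl hAB hCD (hlog hc ha (Ne.symm hac)) (hlog hd hb (Ne.symm hbd))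
    (hlog hd ha (Ne.symm had)) (hlog hc hb (Ne.symm hbc))
  rw [Sform' hl ha hc hac, Sform' hl hb hd hbd, Sform' hl ha hd had, Sform' hl hb hc hbc]
  simp only [← Real.exp_add, Real.exp_le_exp]
  have : (l-1)*(A + C)/2 + (l-1)*(B + D)/2 = (l-1)*(A + D)/2 + (l-1)*(B + C)/2 := by ring
  linarith

lemma Sineq_nonneg {l : ℝ} (hl : 1 ≤ l) {a b c d : ℝ}
    (ha : 0 ≤ a) (hb : 0 ≤ b) (hc : 0 ≤ c) (hd : 0 ≤ d)
    (hab : a < b) (hcd : c < d) (hac : a ≠ c) (had : a ≠ d) (hbc : b ≠ c) (hbd : b ≠ d) :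
    (c^l - a^l)/(c - a) * ((d^l - b^l)/(d - b)) ≤
      (d^l - a^l)/(d - a) * ((c^l - b^l)/(c - b)) := by
  have h0l : (0:ℝ) < l := by linarith
  set P : ℝ → ℝ := fun t =>
    ((c+t)^l - (a+t)^l)/((c+t) - (a+t)) * (((d+t)^l - (b+t)^l)/((d+t) - (b+t))) with hP
  set Q : ℝ → ℝ := fun t =>
    ((d+t)^l - (a+t)^l)/((d+t) - (a+t)) * (((c+t)^l - (b+t)^l)/((c+t) - (b+t))) with hQ
  have key : ∀ t ∈ Ioi (0:ℝ), P t ≤ Q t := by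
    intro t ht
    rw [mem_Ioi] at ht
    exact Sineq_pos hl (by linarith) (by linarith) (by linarith) (by linarith)
      (by linarith) (by linarith)
      (fun h => hac (add_right_cancel h)) (fun h => had (add_right_cancel h))
      (fun h => hbc (add_right_cancel h)) (fun h => hbd (add_right_cancel h))
  have hrp : ∀ x : ℝ, 0 ≤ x → ContinuousAt (fun t : ℝ => (x+t)^l) 0 := by
    intro x hx
    have h1 : ContinuousAt (fun t : ℝ => x + t) 0 := by fun_prop
    have h2 : ContinuousAt (fun s : ℝ => s ^ l) (x + 0) := by
      apply Real.continuousAt_rpow_const _ _ (Or.inr h0l.le)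
    exact h2.comp h1
  have hPc : ContinuousAt P 0 := by
    apply ContinuousAt.mul
    · exact ((hrp c hc).sub (hrp a ha)).div (by fun_prop) (by simpa using sub_ne_zero.mpr hac.symm)
    · exact ((hrp d hd).sub (hrp b hb)).div (by fun_prop) (by simpa using sub_ne_zero.mpr hbd.symm)
  have hQc : ContinuousAt Q 0 := by
    apply ContinuousAt.mul
    · exact ((hrp d hd).sub (hrp a ha)).div (by fun_prop) (by simpa using sub_ne_zero.mpr had.symm)
    · exact ((hrp c hc).sub (hrp b hb)).div (by fun_prop) (by simpa using sub_ne_zero.mpr hbc.symm)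
  have hPt : Filter.Tendsto P (nhdsWithin 0 (Ioi 0)) (nhds (P 0)) :=
    hPc.continuousWithinAt
  have hQt : Filter.Tendsto Q (nhdsWithin 0 (Ioi 0)) (nhds (Q 0)) :=
    hQc.continuousWithinAt
  have hev : ∀ᶠ t in nhdsWithin (0:ℝ) (Ioi 0), P t ≤ Q t :=
    eventually_nhdsWithin_of_forall key
  have hle : P 0 ≤ Q 0 := le_of_tendsto_of_tendsto hPt hQt hev
  simpa [hP, hQ] using hle

/-- Cross-ratio of four points. -/
noncomputable def chi (a b c d : ℝ) : ℝ := ((c - b) * (d - a)) / ((c - a) * (d - b))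

/-- Distortion of the cross-ratio by a map `g`. -/
noncomputable def kappa (g : ℝ → ℝ) (a b c d : ℝ) : ℝ :=
  chi (g a) (g b) (g c) (g d) / chi a b c d

lemma Spos {l : ℝ} (hl : 0 < l) {x y : ℝ} (hx : 0 ≤ x) (hy : 0 ≤ y) (hxy : x ≠ y) :
    0 < (y^l - x^l)/(y - x) := by
  rcases lt_or_gt_of_ne hxy with h | h
  · exact div_pos (by simpa [sub_pos] using Real.rpow_lt_rpow hx h hl) (by linarith)
  · rw [← neg_sub (x^l) (y^l), ← neg_sub x y, neg_div_neg_eq]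
    exact div_pos (by simpa [sub_pos] using Real.rpow_lt_rpow hy h hl) (by linarith)

lemma main_ord {l : ℝ} (hl : 1 < l) {a b c d : ℝ}
    (ha : 0 ≤ a) (hb : 0 ≤ b) (hc : 0 ≤ c) (hd : 0 ≤ d)
    (hab : a < b) (hcd : c < d) (hac : a ≠ c) (had : a ≠ d) (hbc : b ≠ c) (hbd : b ≠ d) :
    1 ≤ kappa (fun x => |x| ^ l) a b c d := by
  have h0l : (0:ℝ) < l := by linarith
  have pac := Spos h0l ha hc hac
  have pbd := Spos h0l hb hd hbd
  have pad := Spos h0l ha hd had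
  have pbc := Spos h0l hb hc hbc
  have hca : c - a ≠ 0 := sub_ne_zero.mpr hac.symm
  have hdb : d - b ≠ 0 := sub_ne_zero.mpr hbd.symm
  have hda : d - a ≠ 0 := sub_ne_zero.mpr had.symm
  have hcb : c - b ≠ 0 := sub_ne_zero.mpr hbc.symm
  have hcal : c^l - a^l ≠ 0 := by
    intro h; rw [h, zero_div] at pac; exact lt_irrefl _ pac
  have hdbl : d^l - b^l ≠ 0 := by
    intro h; rw [h, zero_div] at pbd; exact lt_irrefl _ pbd
  have hdal : d^l - a^l ≠ 0 := by
    intro h; rw [h, zero_div] at pad; exact lt_irrefl _ pad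
  have hcbl : c^l - b^l ≠ 0 := by
    intro h; rw [h, zero_div] at pbc; exact lt_irrefl _ pbc
  have hk : kappa (fun x => |x| ^ l) a b c d =
      ((d^l - a^l)/(d-a) * ((c^l - b^l)/(c-b))) /
        ((c^l - a^l)/(c-a) * ((d^l - b^l)/(d-b))) := by
    unfold kappa chi
    simp only
    rw [abs_of_nonneg ha, abs_of_nonneg hb, abs_of_nonneg hc, abs_of_nonneg hd]
    field_simp
  rw [hk, le_div_iff₀ (by positivity), one_mul]
  exact Sineq_nonneg hl.le ha hb hc hd hab hcd hac had hbc hbd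

lemma kappa_swap (g : ℝ → ℝ) (a b c d : ℝ) :
    kappa g a b c d = kappa g b a d c := by
  unfold kappa chi
  ring

lemma kappa_neg (l : ℝ) (a b c d : ℝ) :
    kappa (fun x => |x| ^ l) (-a) (-b) (-c) (-d) = kappa (fun x => |x| ^ l) a b c d := by
  unfold kappa chi
  simp only [abs_neg]
  ring

lemma main_nonneg {l : ℝ} (hl : 1 < l) {a b c d : ℝ}
    (ha : 0 ≤ a) (hb : 0 ≤ b) (hc : 0 ≤ c) (hd : 0 ≤ d)
    (hac : a ≠ c) (had : a ≠ d) (hbc : b ≠ c) (hbd : b ≠ d)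
    (hor : 0 < (b - a) * (d - c)) :
    1 ≤ kappa (fun x => |x| ^ l) a b c d := by
  rcases mul_pos_iff.mp hor with ⟨h1, h2⟩ | ⟨h1, h2⟩
  · exact main_ord hl ha hb hc hd (by linarith) (by linarith) hac had hbc hbd
  · rw [kappa_swap]
    exact main_ord hl hb ha hd hc (by linarith) (by linarith) hbd hbc had hac


/-- For `g(x) = |x|^ℓ` with `ℓ > 1`, restricted to a half-line on which `g` is
monotone (`[0,∞)` or `(-∞,0]`), the cross-ratio distortion satisfies
`κ_g(a,b,c,d) ≥ 1` for distinct points with `(b-a)(d-c) > 0`. -/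
theorem kappa_abs_rpow_ge_one (l : ℝ) (hl : 1 < l) (a b c d : ℝ)
    (hside : (a ∈ Set.Ici (0:ℝ) ∧ b ∈ Set.Ici (0:ℝ) ∧ c ∈ Set.Ici (0:ℝ) ∧ d ∈ Set.Ici (0:ℝ)) ∨
             (a ∈ Set.Iic (0:ℝ) ∧ b ∈ Set.Iic (0:ℝ) ∧ c ∈ Set.Iic (0:ℝ) ∧ d ∈ Set.Iic (0:ℝ)))
    (hdist : a ≠ b ∧ a ≠ c ∧ a ≠ d ∧ b ≠ c ∧ b ≠ d ∧ c ≠ d)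
    (hor : 0 < (b - a) * (d - c)) :
    1 ≤ kappa (fun x => |x| ^ l) a b c d := by
  obtain ⟨hab, hac, had, hbc, hbd, hcd⟩ := hdist
  rcases hside with ⟨ha, hb, hc, hd⟩ | ⟨ha, hb, hc, hd⟩
  · exact main_nonneg hl ha hb hc hd hac had hbc hbd hor
  · rw [mem_Iic] at ha hb hc hd
    have key := main_nonneg hl (neg_nonneg.mpr ha) (neg_nonneg.mpr hb) (neg_nonneg.mpr hc)
      (neg_nonneg.mpr hd) (fun h => hac (neg_injective h)) (fun h => had (neg_injective h))
      (fun h => hbc (neg_injective h)) (fun h => hbd (neg_injective h))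
      (by rw [show (-b - -a) * (-d - -c) = (b - a) * (d - c) by ring]; exact hor)
    rwa [kappa_neg] at key
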